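/- Let (s_n)_{n≥0} be a sequence of real numbers and let n₀ ≥ 0 be an integer. Assume that the Hankel determinants satisfy D_n > 0 for all n < n₀ and D_n = 0 for all n ≥ n₀. Then for every n ≥ 0 the Hankel matrix H_n = (s_{i+j})_{0≤i,j≤n} is positive semi-definite. -/

import Mathlib

open Matrix Finset

namespace HankelPSD

variable (s : ℕ → ℝ)

def Hk (n : ℕ) : Matrix (Fin n) (Fin n) ℝ := Matrix.of fun i j => s (i.1 + j.1)

variable (n₀ : ℕ) (v : ℕ → ℝ)

lemma Hk_isHermitian (n : ℕ) : (Hk s n).IsHermitian := by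
  ext i j
  simp [Hk, Matrix.conjTranspose_apply, add_comm]

lemma posDef_of_psd_det {m : ℕ} {M : Matrix (Fin m) (Fin m) ℝ}
    (h1 : M.PosSemidef) (h2 : M.det ≠ 0) : M.PosDef := by
  have h1' := Matrix.posSemidef_iff_dotProduct_mulVec.mp h1
  rw [Matrix.posDef_iff_dotProduct_mulVec]
  refine ⟨h1.1, fun x hx => ?_⟩
  rcases eq_or_lt_of_le (h1'.2 x) with h | h
  · exact absurd (Matrix.exists_mulVec_eq_zero_iff.mp
      ⟨x, hx, (h1.dotProduct_mulVec_zero_iff x).mp h.symm⟩) h2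
  · exact h

lemma psd_of_det_one_dim {M : Matrix (Fin 1) (Fin 1) ℝ} (h : 0 ≤ M.det) : M.PosSemidef := by
  rw [Matrix.posSemidef_iff_dotProduct_mulVec]
  refine ⟨?_, fun x => ?_⟩
  · ext i j
    fin_cases i; fin_cases j
    simp [Matrix.conjTranspose_apply]
  · have hform : dotProduct (star x) (M *ᵥ x) = M 0 0 * (x 0 * x 0) := by
      simp [dotProduct, Matrix.mulVec, Fin.sum_univ_one]
      ring
    rw [hform]
    rw [Matrix.det_fin_one] at h
    exact mul_nonneg h (mul_self_nonneg _)

lemma posDef_Hk (n : ℕ) (h : ∀ m < n, 0 < (Hk s (m + 1)).det) : (Hk s n).PosDef := by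
  induction n with
  | zero =>
    rw [Matrix.posDef_iff_dotProduct_mulVec]
    refine ⟨Hk_isHermitian s 0, fun x hx => absurd ?_ hx⟩
    funext i
    exact i.elim0
  | succ n ih =>
    have hA : (Hk s n).PosDef := ih fun m hm => h m (by omega)
    haveI : Invertible (Hk s n) := Matrix.invertibleOfIsUnitDet _ hA.det_pos.ne'.isUnit
    set B : Matrix (Fin n) (Fin 1) ℝ := Matrix.of fun i _ => s (i.1 + n) with hB
    set D : Matrix (Fin 1) (Fin 1) ℝ := Matrix.of fun _ _ => s (n + n) with hD
    have key : (Hk s (n + 1)).submatrix finSumFinEquiv finSumFinEquiv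
        = Matrix.fromBlocks (Hk s n) B Bᴴ D := by
      ext i j
      cases i with
      | inl i =>
        cases j with
        | inl j => simp [Hk]
        | inr j =>
          fin_cases j
          simp [Hk, B]
      | inr i =>
        fin_cases i
        cases j with
        | inl j =>
          simp [Hk, B, Matrix.conjTranspose_apply]
          congr 1
          omega
        | inr j =>
          fin_cases j
          simp [Hk, D]
    have hdetHk : 0 < (Hk s (n + 1)).det := h n (Nat.lt_succ_self n)
    have hdetsub : (Matrix.fromBlocks (Hk s n) B Bᴴ D).det = (Hk s (n + 1)).det := by
      rw [← key, Matrix.det_submatrix_equiv_self]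
    have hdetblocks : (Matrix.fromBlocks (Hk s n) B Bᴴ D).det
        = (Hk s n).det * (D - Bᴴ * ⅟(Hk s n) * B).det := Matrix.det_fromBlocks₁₁ _ _ _ _
    have hschur : 0 < (D - Bᴴ * ⅟(Hk s n) * B).det := by
      have h1 : 0 < (Hk s n).det * (D - Bᴴ * ⅟(Hk s n) * B).det := by
        rw [← hdetblocks, hdetsub]; exact hdetHk
      have h2 : 0 < (Hk s n).det := hA.det_pos
      nlinarith
    have hpsd : (Matrix.fromBlocks (Hk s n) B Bᴴ D).PosSemidef := by
      rw [Matrix.PosDef.fromBlocks₁₁ B D hA]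
      rw [← Matrix.invOf_eq_nonsing_inv]
      exact psd_of_det_one_dim hschur.le
    have hpsd2 : (Hk s (n + 1)).PosSemidef := by
      rw [← Matrix.posSemidef_submatrix_equiv (finSumFinEquiv (m := n) (n := 1)), key]
      exact hpsd
    exact posDef_of_psd_det hpsd2 hdetHk.ne'


def dd (k : ℕ) : ℝ := ∑ t ∈ range (n₀ + 1), v t * s (k + t)
def ee (l : ℕ) : ℝ := ∑ t ∈ range (n₀ + 1), v t * dd s n₀ v (l + t)
def Uf (l j : ℕ) : ℝ :=
  if j < n₀ then (if l = j then 1 else 0)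
  else if j - n₀ ≤ l ∧ l ≤ j then v (l - (j - n₀)) else 0

lemma sum_Uf_mul {K j : ℕ} (hn : n₀ ≤ j) (hj : j ≤ K) (F : ℕ → ℝ) :
    ∑ l ∈ range (K + 1), Uf n₀ v l j * F l
      = ∑ t ∈ range (n₀ + 1), v t * F (j - n₀ + t) := by
  have hsub : range (j + 1) ⊆ range (K + 1) := by
    intro x hx; simp only [mem_range] at *; omega
  have hout : ∀ x ∈ range (K + 1), x ∉ range (j + 1) → Uf n₀ v x j * F x = 0 := by
    intro x _ hx
    simp only [mem_range] at hx
    simp only [Uf]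
    rw [if_neg (by omega), if_neg (by omega), zero_mul]
  rw [← Finset.sum_subset hsub hout]
  have hsplit : j + 1 = (j - n₀) + (n₀ + 1) := by omega
  rw [hsplit, Finset.sum_range_add]
  have h1 : ∑ l ∈ range (j - n₀), Uf n₀ v l j * F l = 0 := by
    apply Finset.sum_eq_zero
    intro l hl
    simp only [mem_range] at hl
    simp only [Uf]
    rw [if_neg (by omega), if_neg (by omega), zero_mul]
  rw [h1, zero_add]
  apply Finset.sum_congr rfl
  intro t ht
  simp only [mem_range] at ht
  simp only [Uf]
  rw [if_neg (by omega), if_pos (by omega)]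
  congr 2
  omega

lemma sum_Uf_mul_lt {K j : ℕ} (hn : j < n₀) (hj : j ≤ K) (F : ℕ → ℝ) :
    ∑ l ∈ range (K + 1), Uf n₀ v l j * F l = F j := by
  simp only [Uf, if_pos hn]
  rw [Finset.sum_eq_single j]
  · simp
  · intro b _ hb
    rw [if_neg hb, zero_mul]
  · intro hj'
    simp only [mem_range] at hj'
    omega

/-- c-value of the column-transformed Hankel matrix -/
def cvj (j k : ℕ) : ℝ := if j < n₀ then s (k + j) else dd s n₀ v (k + (j - n₀))

lemma det_ne_zero_of_defect {K : ℕ} (hK : n₀ < K)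
    (hvlast : v n₀ ≠ 0)
    (hGdet : (Hk s n₀).det ≠ 0)
    (hIH : ∀ l < K, dd s n₀ v l = 0)
    (hdK : dd s n₀ v K ≠ 0) : (Hk s (K + 1)).det ≠ 0 := by
  set U : Matrix (Fin (K + 1)) (Fin (K + 1)) ℝ :=
    Matrix.of (fun l j => Uf n₀ v l.1 j.1) with hU
  -- U is upper triangular
  have hUtri : U.BlockTriangular id := by
    intro i j hij
    simp only [id] at hij
    have hij' : (j : ℕ) < (i : ℕ) := hij
    simp only [hU, Matrix.of_apply, Uf]
    split_ifs with h1 h2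
    · omega
    · rfl
    · omega
    · rfl
  have hUdiag : ∀ i : Fin (K + 1), U i i = if (i : ℕ) < n₀ then 1 else v n₀ := by
    intro i
    simp only [hU, Matrix.of_apply, Uf]
    split_ifs with h1 h2
    · simp
    · congr 1
      omega
    · exact absurd ⟨by omega, le_rfl⟩ h2
  have hdetU : U.det ≠ 0 := by
    rw [Matrix.det_of_upperTriangular hUtri]
    apply Finset.prod_ne_zero_iff.mpr
    intro i _
    rw [hUdiag i]
    split_ifs
    · exact one_ne_zero
    · exact hvlast
  -- the product of Hk with U
  have hHU : ∀ k j : Fin (K + 1), (Hk s (K + 1) * U) k j = cvj s n₀ v j.1 k.1 := by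
    intro k j
    rw [Matrix.mul_apply]
    have step : ∑ l : Fin (K + 1), Hk s (K + 1) k l * U l j
        = ∑ l ∈ range (K + 1), Uf n₀ v l j.1 * s (k.1 + l) := by
      rw [← Fin.sum_univ_eq_sum_range (fun l => Uf n₀ v l j.1 * s (k.1 + l)) (K + 1)]
      exact Finset.sum_congr rfl fun l _ => mul_comm _ _
    rw [step]
    by_cases hj : (j : ℕ) < n₀
    · rw [sum_Uf_mul_lt n₀ v hj (by omega) (fun l => s (k.1 + l)), cvj, if_pos hj]
    · rw [sum_Uf_mul n₀ v (by omega) (by omega) (fun l => s (k.1 + l)), cvj, if_neg hj]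
      unfold dd
      apply Finset.sum_congr rfl
      intro t _
      congr 2
      omega
  -- M = Uᵀ * Hk * U entries
  set M : Matrix (Fin (K + 1)) (Fin (K + 1)) ℝ := Uᵀ * Hk s (K + 1) * U with hM
  have hMentry : ∀ i j : Fin (K + 1),
      M i j = if (i : ℕ) < n₀
        then (if (j : ℕ) < n₀ then s (i.1 + j.1) else 0)
        else (if (j : ℕ) < n₀ then 0 else ee s n₀ v ((i.1 - n₀) + (j.1 - n₀))) := by
    intro i j
    have hMij : M i j = ∑ k ∈ range (K + 1), Uf n₀ v k i.1 * cvj s n₀ v j.1 k := by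
      rw [hM, Matrix.mul_assoc, Matrix.mul_apply]
      rw [← Fin.sum_univ_eq_sum_range (fun k => Uf n₀ v k i.1 * cvj s n₀ v j.1 k) (K + 1)]
      apply Finset.sum_congr rfl
      intro k _
      rw [Matrix.transpose_apply, hHU k j]
      rfl
    rw [hMij]
    by_cases hi : (i : ℕ) < n₀
    · rw [if_pos hi, sum_Uf_mul_lt n₀ v hi (by omega) (fun k => cvj s n₀ v j.1 k)]
      by_cases hj : (j : ℕ) < n₀
      · rw [if_pos hj, cvj, if_pos hj]
      · rw [if_neg hj, cvj, if_neg hj]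
        exact hIH _ (by omega)
    · rw [if_neg hi, sum_Uf_mul n₀ v (by omega) (by omega) (fun k => cvj s n₀ v j.1 k)]
      by_cases hj : (j : ℕ) < n₀
      · rw [if_pos hj]
        have : ∀ t ∈ range (n₀ + 1), v t * cvj s n₀ v j.1 (i.1 - n₀ + t)
            = v t * s ((i.1 - n₀ + j.1) + t) := by
          intro t _
          rw [cvj, if_pos hj]
          congr 2
          omega
        rw [Finset.sum_congr rfl this]
        exact hIH _ (by omega)
      · rw [if_neg hj]
        unfold ee
        apply Finset.sum_congr rfl
        intro t ht
        simp only [mem_range] at ht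
        rw [cvj, if_neg hj]
        congr 2
        omega
  -- block determinant
  have hblocks : M.det = (M.toSquareBlockProp (fun i : Fin (K + 1) => (i : ℕ) < n₀)).det
      * (M.toSquareBlockProp (fun i : Fin (K + 1) => ¬ (i : ℕ) < n₀)).det := by
    apply Matrix.twoBlockTriangular_det
    intro i hi j hj
    rw [hMentry i j, if_neg hi, if_pos hj]
  -- block 1 = Hk n₀
  have hb1 : (M.toSquareBlockProp (fun i : Fin (K + 1) => (i : ℕ) < n₀)).det
      = (Hk s n₀).det := by
    let φ : {a : Fin (K + 1) // (a : ℕ) < n₀} ≃ Fin n₀ :=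
      { toFun := fun a => ⟨a.1.1, a.2⟩
        invFun := fun b => ⟨⟨b.1, by omega⟩, b.2⟩
        left_inv := fun a => by ext; rfl
        right_inv := fun b => by ext; rfl }
    have heq : M.toSquareBlockProp (fun i : Fin (K + 1) => (i : ℕ) < n₀)
        = (Hk s n₀).submatrix φ.symm.symm φ.symm.symm := by
      rw [Matrix.toSquareBlockProp_def]
      ext a b
      simp only [Matrix.of_apply, Matrix.submatrix_apply]
      rw [hMentry a.1 b.1, if_pos a.2, if_pos b.2]
      rfl
    rw [heq]
    exact Matrix.det_submatrix_equiv_self _ _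
  -- block 2
  set κ := K - n₀ with hκ
  set B0 : Matrix (Fin (κ + 1)) (Fin (κ + 1)) ℝ :=
    Matrix.of (fun a b => ee s n₀ v (a.1 + b.1)) with hB0
  have hee0 : ∀ l < κ, ee s n₀ v l = 0 := by
    intro l hl
    apply Finset.sum_eq_zero
    intro t ht
    simp only [mem_range] at ht
    rw [hIH (l + t) (by omega), mul_zero]
  have heeκ : ee s n₀ v κ = v n₀ * dd s n₀ v K := by
    unfold ee
    rw [Finset.sum_eq_single n₀]
    · have hk : κ + n₀ = K := by omega
      rw [hk]
    · intro t ht htne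
      simp only [mem_range] at ht
      rw [hIH (κ + t) (by omega), mul_zero]
    · intro h
      simp only [mem_range] at h
      omega
  have hdetB0 : B0.det ≠ 0 := by
    have htr : (B0.submatrix (Fin.revPerm : Equiv.Perm (Fin (κ + 1))) id).BlockTriangular id := by
      intro a b hab
      have hab' : (b : Fin (κ + 1)) < a := hab
      simp only [Matrix.submatrix_apply, hB0, Matrix.of_apply, id]
      apply hee0
      have hra : (Fin.revPerm a : Fin (κ + 1)).1 = κ + 1 - (a.1 + 1) := by
        rw [Fin.revPerm_apply, Fin.val_rev]
      rw [hra]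
      have hb : (b : Fin (κ+1)).1 < a.1 := hab'
      omega
    have hdiag : ∀ a : Fin (κ + 1),
        (B0.submatrix (Fin.revPerm : Equiv.Perm (Fin (κ + 1))) id) a a
          = v n₀ * dd s n₀ v K := by
      intro a
      simp only [Matrix.submatrix_apply, hB0, Matrix.of_apply, id]
      rw [← heeκ]
      have hra : (Fin.revPerm a : Fin (κ + 1)).1 = κ + 1 - (a.1 + 1) := by
        rw [Fin.revPerm_apply, Fin.val_rev]
      rw [hra]
      congr 1
      omega
    have h1 : (B0.submatrix (Fin.revPerm : Equiv.Perm (Fin (κ + 1))) id).det ≠ 0 := by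
      rw [Matrix.det_of_upperTriangular htr]
      apply Finset.prod_ne_zero_iff.mpr
      intro a _
      rw [hdiag a]
      exact mul_ne_zero hvlast hdK
    rw [Matrix.det_permute] at h1
    intro h0
    rw [h0, mul_zero] at h1
    exact h1 rfl
  have hb2 : (M.toSquareBlockProp (fun i : Fin (K + 1) => ¬ (i : ℕ) < n₀)).det
      = B0.det := by
    let ψ : {a : Fin (K + 1) // ¬ (a : ℕ) < n₀} ≃ Fin (κ + 1) :=
      { toFun := fun a => ⟨a.1.1 - n₀, by omega⟩
        invFun := fun b => ⟨⟨n₀ + b.1, by omega⟩, by simp⟩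
        left_inv := fun a => by
          have := a.2
          ext
          simp
          omega
        right_inv := fun b => by
          ext
          simp }
    have heq : M.toSquareBlockProp (fun i : Fin (K + 1) => ¬ (i : ℕ) < n₀)
        = B0.submatrix ψ.symm.symm ψ.symm.symm := by
      rw [Matrix.toSquareBlockProp_def]
      ext a b
      simp only [Matrix.of_apply, Matrix.submatrix_apply]
      rw [hMentry a.1 b.1, if_neg a.2, if_neg b.2]
      rfl
    rw [heq]
    exact Matrix.det_submatrix_equiv_self _ _
  -- conclude
  have hMdet : M.det ≠ 0 := by
    rw [hblocks, hb1, hb2]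
    exact mul_ne_zero hGdet hdetB0
  intro hzero
  apply hMdet
  rw [hM, Matrix.det_mul, Matrix.det_mul, hzero, Matrix.det_transpose]
  ring

/-- coefficients expressing `s (l + j)` in terms of `s l, ..., s (l + n₀ - 1)` -/
noncomputable def acoef (n₀ : ℕ) (c : Fin n₀ → ℝ) : ℕ → Fin n₀ → ℝ
  | j =>
    if h : j < n₀ then fun k => if (k : ℕ) = j then 1 else 0
    else fun k => ∑ t : Fin n₀, c t * acoef n₀ c (j - n₀ + t) k
  decreasing_by
    have := t.2
    omega

lemma hexp (n₀ : ℕ) (c : Fin n₀ → ℝ)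
    (hrec : ∀ l, s (l + n₀) = ∑ t : Fin n₀, c t * s (l + t)) :
    ∀ j l, s (l + j) = ∑ k : Fin n₀, acoef n₀ c j k * s (l + k) := by
  intro j
  induction j using Nat.strong_induction_on with
  | _ j IH =>
    intro l
    rw [acoef]
    by_cases h : j < n₀
    · rw [dif_pos h]
      rw [Finset.sum_eq_single (⟨j, h⟩ : Fin n₀)]
      · simp
      · intro b _ hb
        rw [if_neg (fun hc => hb (Fin.ext hc)), zero_mul]
      · intro hmem
        exact absurd (Finset.mem_univ _) hmem
    · rw [dif_neg h]
      have step1 : ∑ k : Fin n₀, (∑ t : Fin n₀, c t * acoef n₀ c (j - n₀ + t) k) * s (l + k)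
          = ∑ t : Fin n₀, c t * ∑ k : Fin n₀, acoef n₀ c (j - n₀ + t) k * s (l + k) := by
        simp_rw [Finset.sum_mul, mul_assoc]
        rw [Finset.sum_comm]
        simp_rw [← Finset.mul_sum]
      rw [step1]
      have step2 : ∑ t : Fin n₀, c t * ∑ k : Fin n₀, acoef n₀ c (j - n₀ + t) k * s (l + k)
          = ∑ t : Fin n₀, c t * s ((l + (j - n₀)) + t) := by
        apply Finset.sum_congr rfl
        intro t _
        rw [← IH (j - n₀ + t) (by have := t.2; omega) l,
          show l + (j - n₀ + (t : ℕ)) = l + (j - n₀) + (t : ℕ) from by omega]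
      rw [step2, ← hrec (l + (j - n₀))]
      have harg : l + j = l + (j - n₀) + n₀ := by omega
      rw [harg]


end HankelPSD

/-- If the Hankel determinants of a real sequence satisfy `D n > 0` for `n < n₀`
and `D n = 0` for `n ≥ n₀`, then every Hankel matrix is positive semi-definite. -/
theorem hankel_posSemidef_of_det_sign_pattern (s : ℕ → ℝ) (n₀ : ℕ)
    (hpos : ∀ n < n₀, 0 < (Matrix.of fun i j : Fin (n + 1) => s (i.1 + j.1)).det)
    (hzero : ∀ n ≥ n₀, (Matrix.of fun i j : Fin (n + 1) => s (i.1 + j.1)).det = 0) :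
    ∀ n : ℕ, (Matrix.of fun i j : Fin (n + 1) => s (i.1 + j.1)).PosSemidef := by
  intro n
  open HankelPSD in
  show (Hk s (n + 1)).PosSemidef
  have hpos' : ∀ m < n₀, 0 < (HankelPSD.Hk s (m + 1)).det := hpos
  have hzero' : ∀ m ≥ n₀, (HankelPSD.Hk s (m + 1)).det = 0 := hzero
  have hG : (HankelPSD.Hk s n₀).PosDef := HankelPSD.posDef_Hk s n₀ fun m hm => hpos' m hm
  have hGdet : (HankelPSD.Hk s n₀).det ≠ 0 := hG.det_pos.ne'
  obtain ⟨w, hw0, hwk⟩ := Matrix.exists_mulVec_eq_zero_iff.mpr (hzero' n₀ le_rfl)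
  set vN : ℕ → ℝ := fun t => if h : t < n₀ + 1 then w ⟨t, h⟩ else 0 with hvN
  have hdd_fin : ∀ k : ℕ, HankelPSD.dd s n₀ vN k = ∑ t : Fin (n₀ + 1), w t * s (k + t) := by
    intro k
    rw [HankelPSD.dd, ← Fin.sum_univ_eq_sum_range (fun t => vN t * s (k + t)) (n₀ + 1)]
    apply Finset.sum_congr rfl
    intro t _
    have : vN t.1 = w t := by
      rw [hvN]
      simp [t.2]
    rw [this]
  have hbase : ∀ k, k ≤ n₀ → HankelPSD.dd s n₀ vN k = 0 := by
    intro k hk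
    rw [hdd_fin k]
    have hrow := congrFun hwk ⟨k, by omega⟩
    simp only [Matrix.mulVec, dotProduct, HankelPSD.Hk, Matrix.of_apply,
      Pi.zero_apply] at hrow
    rw [← hrow]
    apply Finset.sum_congr rfl
    intro t _
    ring
  have hvlast : vN n₀ ≠ 0 := by
    have hvn : vN n₀ = w (Fin.last n₀) := by
      rw [hvN]
      simp
      rfl
    rw [hvn]
    intro h0
    set u : Fin n₀ → ℝ := fun i => w i.castSucc with hu
    have hker : HankelPSD.Hk s n₀ *ᵥ u = 0 := by
      funext i
      have hrow := congrFun hwk ⟨i.1, by omega⟩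
      simp only [Matrix.mulVec, dotProduct, HankelPSD.Hk, Matrix.of_apply,
        Pi.zero_apply] at hrow ⊢
      rw [Fin.sum_univ_castSucc] at hrow
      simp only [Fin.coe_castSucc, Fin.val_last, h0, mul_zero, add_zero] at hrow
      exact hrow
    have hu0 : u = 0 := by
      by_contra hne
      exact hGdet (Matrix.exists_mulVec_eq_zero_iff.mp ⟨u, hne, hker⟩)
    apply hw0
    funext j
    refine Fin.lastCases ?_ ?_ j
    · exact h0
    · intro i
      exact congrFun hu0 i
  have hdd : ∀ k, HankelPSD.dd s n₀ vN k = 0 := by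
    intro k
    induction k using Nat.strong_induction_on with
    | _ K IH =>
      rcases le_or_gt K n₀ with hle | hlt
      · exact hbase K hle
      · by_contra hne
        exact HankelPSD.det_ne_zero_of_defect s n₀ vN hlt hvlast hGdet IH hne
          (hzero' K hlt.le)
  have hWne : w (Fin.last n₀) ≠ 0 := by
    have hvn : vN n₀ = w (Fin.last n₀) := by
      rw [hvN]; simp; rfl
    rw [← hvn]; exact hvlast
  set c : Fin n₀ → ℝ := fun t => -(w t.castSucc) / w (Fin.last n₀) with hc
  have hrec : ∀ l, s (l + n₀) = ∑ t : Fin n₀, c t * s (l + t) := by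
    intro l
    have h1 : ∑ t : Fin (n₀ + 1), w t * s (l + t) = 0 := by
      rw [← hdd_fin l]; exact hdd l
    rw [Fin.sum_univ_castSucc] at h1
    simp only [Fin.coe_castSucc, Fin.val_last] at h1
    have h2 : ∑ t : Fin n₀, c t * s (l + t)
        = (∑ t : Fin n₀, -(w t.castSucc) * s (l + t)) / w (Fin.last n₀) := by
      rw [Finset.sum_div]
      exact Finset.sum_congr rfl fun t _ => div_mul_eq_mul_div _ _ _
    rw [h2, eq_div_iff hWne]
    have h3 : ∑ t : Fin n₀, -(w t.castSucc) * s (l + t)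
        = -∑ t : Fin n₀, w t.castSucc * s (l + t) := by
      simp [neg_mul]
    rw [h3]
    linarith [h1]
  have hexp' := HankelPSD.hexp s n₀ c hrec
  set A : Matrix (Fin n₀) (Fin (n + 1)) ℝ :=
    Matrix.of (fun k j => HankelPSD.acoef n₀ c j.1 k) with hA
  have hinner : ∀ (k : Fin n₀) (j : Fin (n + 1)),
      (HankelPSD.Hk s n₀ * A) k j = s (k.1 + j.1) := by
    intro k j
    rw [Matrix.mul_apply, hexp' j.1 k.1]
    apply Finset.sum_congr rfl
    intro k' _
    simp only [HankelPSD.Hk, hA, Matrix.of_apply]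
    ring
  have hfact : HankelPSD.Hk s (n + 1) = Aᴴ * (HankelPSD.Hk s n₀ * A) := by
    ext i j
    rw [Matrix.mul_apply]
    have hterm : ∀ k : Fin n₀, Aᴴ i k * (HankelPSD.Hk s n₀ * A) k j
        = HankelPSD.acoef n₀ c i.1 k * s (j.1 + k.1) := by
      intro k
      rw [hinner k j, Matrix.conjTranspose_apply]
      simp only [hA, Matrix.of_apply, star_trivial]
      rw [show (k.1 + j.1) = (j.1 + k.1) from by omega]
    rw [Finset.sum_congr rfl fun k _ => hterm k, ← hexp' i.1 j.1]
    simp only [HankelPSD.Hk, Matrix.of_apply]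
    rw [show (j.1 + i.1) = (i.1 + j.1) from by omega]
  have hpsd : (Aᴴ * (HankelPSD.Hk s n₀ * A)).PosSemidef := by
    rw [← Matrix.mul_assoc]
    exact hG.posSemidef.conjTranspose_mul_mul_same A
  rw [hfact]
  exact hpsd
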